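/- Let q be a prime power, let n and m be positive integers with m > n, and let 𝓔 be a weak egg in a (2n+m)-dimensional vector space V over the finite field F with exactly q elements. If 𝓔 is good at some element E ∈ 𝓔, then n divides m. -/

import Mathlib

open Submodule Module

structure FieldStructureOn (q n : ℕ) (F : Type*) [Field F]
    (W : Type*) [AddCommGroup W] [Module F W] where
  K : Type
  [fieldK : Field K]
  [fintypeK : Fintype K]
  [algFK : Algebra F K]
  [modKW : Module K W]
  card_K : Fintype.card K = q ^ n
  compat : ∀ (a : F) (w : W), (algebraMap F K a) • w = a • w

namespace FieldStructureOn

variable {q n : ℕ} {F : Type*} [Field F] {W : Type*} [AddCommGroup W] [Module F W]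

def line (fs : FieldStructureOn q n F W) (w : W) : Set W :=
  letI := fs.fieldK
  letI := fs.modKW
  Set.range fun c : fs.K => c • w

/-- `O` is the set of `K`-lines of zeros of a nondegenerate quadratic form over `K`. -/
def ConicWitness (fs : FieldStructureOn q n F W) (O : Set (Submodule F W)) : Prop :=
  letI := fs.fieldK
  letI := fs.modKW
  ∃ Q : QuadraticForm fs.K W,
    (∀ x : W, (∀ y : W, Q (x + y) - Q x - Q y = 0) → x = 0) ∧
    O = {X : Submodule F W | ∃ w : W, w ≠ 0 ∧ Q w = 0 ∧ (X : Set W) = fs.line w}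

/-- `𝓔` is the set of `K`-lines of zeros of a nondegenerate quadratic form over `K`
admitting no totally singular `2`-dimensional `K`-subspace (an elliptic quadric). -/
def EllipticWitness (fs : FieldStructureOn q n F W) (𝓔 : Set (Submodule F W)) : Prop :=
  letI := fs.fieldK
  letI := fs.modKW
  ∃ Q : QuadraticForm fs.K W,
    (∀ x : W, (∀ y : W, Q (x + y) - Q x - Q y = 0) → x = 0) ∧
    (∀ U : Submodule fs.K W, Module.finrank fs.K U = 2 → ¬ ∀ w ∈ U, Q w = 0) ∧
    𝓔 = {X : Submodule F W | ∃ w : W, w ≠ 0 ∧ Q w = 0 ∧ (X : Set W) = fs.line w}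

end FieldStructureOn

def IsDesarguesianSpread (q n : ℕ) {F : Type*} [Field F]
    {W : Type*} [AddCommGroup W] [Module F W] (S : Set (Submodule F W)) : Prop :=
  ∃ fs : FieldStructureOn q n F W,
    S = {X : Submodule F W | ∃ w : W, w ≠ 0 ∧ (X : Set W) = fs.line w}

/-- `S`, a set of subspaces of `V` contained in `P`, is a Desarguesian spread of `P`
regarded as an `F`-vector space in its own right. -/
def IsDesarguesianSpreadIn (q n : ℕ) {F : Type*} [Field F]
    {V : Type*} [AddCommGroup V] [Module F V]
    (P : Submodule F V) (S : Set (Submodule F V)) : Prop :=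
  (∀ X ∈ S, X ≤ P) ∧
  IsDesarguesianSpread q n ((fun Y : Submodule F V => Y.comap P.subtype) '' S)

/-- A pseudo-cap: a set of `n`-dimensional subspaces, any three distinct members of
which span a subspace of dimension `3n`. -/
def IsPseudoCap (n : ℕ) {F : Type*} [Field F]
    {V : Type*} [AddCommGroup V] [Module F V] (C : Set (Submodule F V)) : Prop :=
  (∀ E ∈ C, finrank F E = n) ∧
  ∀ E₁ ∈ C, ∀ E₂ ∈ C, ∀ E₃ ∈ C,
    E₁ ≠ E₂ → E₁ ≠ E₃ → E₂ ≠ E₃ → finrank F ↥(E₁ ⊔ E₂ ⊔ E₃) = 3 * n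

/-- A weak egg: a pseudo-cap of size `q ^ m + 1`. -/
def IsWeakEgg (q n m : ℕ) {F : Type*} [Field F]
    {V : Type*} [AddCommGroup V] [Module F V] (𝓔 : Set (Submodule F V)) : Prop :=
  IsPseudoCap n 𝓔 ∧ 𝓔.ncard = q ^ m + 1

/-- An egg: a weak egg each of whose elements has a tangent space. -/
def IsEgg (q n m : ℕ) {F : Type*} [Field F]
    {V : Type*} [AddCommGroup V] [Module F V] (𝓔 : Set (Submodule F V)) : Prop :=
  IsWeakEgg q n m 𝓔 ∧
  ∀ E ∈ 𝓔, ∃ T : Submodule F V, finrank F T = n + m ∧ E ≤ T ∧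
    ∀ E' ∈ 𝓔, E' ≠ E → T ⊓ E' = ⊥

/-- A weak egg `𝓔` is good at `E` if every `3n`-dimensional subspace containing `E`
and at least two other elements of `𝓔` contains exactly `q ^ n + 1` elements of `𝓔`. -/
def IsGoodAt (q n : ℕ) {F : Type*} [Field F]
    {V : Type*} [AddCommGroup V] [Module F V]
    (𝓔 : Set (Submodule F V)) (E : Submodule F V) : Prop :=
  ∀ W : Submodule F V, finrank F W = 3 * n → E ≤ W →
    (∃ E₁ ∈ 𝓔, ∃ E₂ ∈ 𝓔, E₁ ≠ E ∧ E₂ ≠ E ∧ E₁ ≠ E₂ ∧ E₁ ≤ W ∧ E₂ ≤ W) →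
    {E' ∈ 𝓔 | E' ≤ W}.ncard = q ^ n + 1

/-- `E` induces (in `V ⧸ E`) a partial spread which extends to a Desarguesian spread. -/
def InducesDesarguesian (q n : ℕ) {F : Type*} [Field F]
    {V : Type*} [AddCommGroup V] [Module F V]
    (𝓒 : Set (Submodule F V)) (E : Submodule F V) : Prop :=
  ∃ D : Set (Submodule F (V ⧸ E)), IsDesarguesianSpread q n D ∧
    ∀ E' ∈ 𝓒, E' ≠ E → E'.map E.mkQ ∈ D

/-- A pseudo-cap is elementary if it is contained in a Desarguesian spread,
i.e. every element is a `K`-line for a compatible `K`-structure on `V`. -/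
def IsElementary (q n : ℕ) {F : Type*} [Field F]
    {V : Type*} [AddCommGroup V] [Module F V] (𝓒 : Set (Submodule F V)) : Prop :=
  ∃ fs : FieldStructureOn q n F V, ∀ X ∈ 𝓒, ∃ w : V, w ≠ 0 ∧ (X : Set V) = fs.line w

/-- `O` is a pseudo-conic in the `3n`-dimensional space `W`. -/
def IsPseudoConic (q n : ℕ) {F : Type*} [Field F]
    {W : Type*} [AddCommGroup W] [Module F W] (O : Set (Submodule F W)) : Prop :=
  ∃ fs : FieldStructureOn q n F W, fs.ConicWitness O

/-- `O`, a set of subspaces of `V` contained in `W`, is a pseudo-conic in `W`. -/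
def IsPseudoConicIn (q n : ℕ) {F : Type*} [Field F]
    {V : Type*} [AddCommGroup V] [Module F V]
    (W : Submodule F V) (O : Set (Submodule F V)) : Prop :=
  (∀ X ∈ O, X ≤ W) ∧
  IsPseudoConic q n ((fun Y : Submodule F V => Y.comap W.subtype) '' O)

/-- A weak egg in a `4n`-dimensional space is classical if it is the field reduction
of an elliptic quadric of `PG(3, q^n)`. -/
def IsClassical (q n : ℕ) {F : Type*} [Field F]
    {V : Type*} [AddCommGroup V] [Module F V] (𝓔 : Set (Submodule F V)) : Prop :=
  ∃ fs : FieldStructureOn q n F V, fs.EllipticWitness 𝓔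

/-- `C`, a set of subspaces of `V` contained in `W`, is elementary inside `W`. -/
def IsElementaryIn (q n : ℕ) {F : Type*} [Field F]
    {V : Type*} [AddCommGroup V] [Module F V]
    (W : Submodule F V) (C : Set (Submodule F V)) : Prop :=
  (∀ X ∈ C, X ≤ W) ∧
  ∃ fs : FieldStructureOn q n F ↥W,
    ∀ X ∈ C, ∃ w : ↥W, w ≠ 0 ∧ ((X.comap W.subtype : Submodule F ↥W) : Set ↥W) = fs.line w


private lemma aux_pow_sub_one_dvd (q n : ℕ) (hq : 2 ≤ q) (hn : 0 < n) :
    ∀ m, q ^ n - 1 ∣ q ^ m - 1 → n ∣ m := by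
  intro m
  induction m using Nat.strong_induction_on with
  | _ m ih =>
    intro hd
    rcases lt_or_ge m n with h | h
    · have h1 : q ^ m < q ^ n := Nat.pow_lt_pow_right (by omega) h
      have h2 : 1 ≤ q ^ m := Nat.one_le_pow _ _ (by omega)
      have h0 : q ^ m - 1 = 0 := Nat.eq_zero_of_dvd_of_lt hd (by omega)
      have h4 : m = 0 := by
        by_contra h'
        have h5 : q ≤ q ^ m := Nat.le_self_pow h' q
        omega
      simp [h4]
    · have e : q ^ (m - n) * q ^ n = q ^ m := by
        rw [← pow_add]; congr 1; omega
      have h1 : 1 ≤ q ^ n := Nat.one_le_pow _ _ (by omega)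
      have h3 : 1 ≤ q ^ (m - n) := Nat.one_le_pow _ _ (by omega)
      have hmul : q ^ (m - n) * q ^ n = q ^ (m - n) * (q ^ n - 1) + q ^ (m - n) := by
        have hb : q ^ n - 1 + 1 = q ^ n := by omega
        calc q ^ (m - n) * q ^ n = q ^ (m - n) * ((q ^ n - 1) + 1) := by rw [hb]
          _ = q ^ (m - n) * (q ^ n - 1) + q ^ (m - n) := by ring
      have h2 : q ^ m - 1 = q ^ (m - n) * (q ^ n - 1) + (q ^ (m - n) - 1) := by omega
      have key : q ^ n - 1 ∣ q ^ (m - n) - 1 := by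
        rw [h2] at hd
        exact (Nat.dvd_add_right (dvd_mul_left _ _)).mp hd
      obtain ⟨k, hk⟩ := ih (m - n) (by omega) key
      exact ⟨k + 1, by rw [Nat.mul_succ]; omega⟩

/-- A weak egg in a `(2n+m)`-dimensional space which is good at some element
can only exist if `n` divides `m`. -/
theorem stmt_0 (q n m : ℕ) (hq : IsPrimePow q) (hn : 0 < n) (hm : n < m)
    (F : Type*) [Field F] [Fintype F] (hF : Fintype.card F = q)
    (V : Type*) [AddCommGroup V] [Module F V] (hV : finrank F V = 2 * n + m)
    (𝓔 : Set (Submodule F V)) (h𝓔 : IsWeakEgg q n m 𝓔)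
    (E : Submodule F V) (hE : E ∈ 𝓔) (hgood : IsGoodAt q n 𝓔 E) :
    n ∣ m := by
  classical
  obtain ⟨⟨hdim, hspan⟩, hcard⟩ := h𝓔
  have hq2 : 2 ≤ q := hq.two_le
  haveI : FiniteDimensional F V := FiniteDimensional.of_finrank_pos (by omega)
  have hfin : 𝓔.Finite := by
    by_contra h
    rw [Set.Infinite.ncard h] at hcard
    omega
  set S : Set (Submodule F V) := 𝓔 \ {E} with hSdef
  have hSfin : S.Finite := hfin.diff
  have hScard : S.ncard = q ^ m := by
    rw [hSdef, Set.ncard_diff_singleton_of_mem hE, hcard]; omega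
  have hSne : S.Nonempty := by
    apply Set.nonempty_of_ncard_ne_zero
    rw [hScard]
    positivity
  obtain ⟨E₁, hE₁S⟩ := hSne
  have hE₁𝓔 : E₁ ∈ 𝓔 := hE₁S.1
  have hE₁E : E₁ ≠ E := by simpa using hE₁S.2
  set S' : Set (Submodule F V) := S \ {E₁} with hS'def
  have hS'fin : S'.Finite := hSfin.diff
  have hS'card : S'.ncard = q ^ m - 1 := by
    rw [hS'def, Set.ncard_diff_singleton_of_mem hE₁S, hScard]
  set f : Submodule F V → Submodule F V := fun X => E ⊔ E₁ ⊔ X with hfdef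
  have hmemS' : ∀ X, X ∈ S' ↔ X ∈ 𝓔 ∧ X ≠ E ∧ X ≠ E₁ := by
    intro X
    simp only [hS'def, hSdef, Set.mem_diff, Set.mem_singleton_iff]
    tauto
  have hfiber : ∀ X₀ ∈ S', {X ∈ S' | f X = f X₀}.ncard = q ^ n - 1 := by
    intro X₀ hX₀
    obtain ⟨hX₀𝓔, hX₀E, hX₀E₁⟩ := (hmemS' X₀).mp hX₀
    have hEW : E ≤ f X₀ := le_trans le_sup_left le_sup_left
    have hE₁W : E₁ ≤ f X₀ := le_trans le_sup_right le_sup_left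
    have hX₀W : X₀ ≤ f X₀ := le_sup_right
    have hErk : finrank F ↥(f X₀) = 3 * n :=
      hspan E hE E₁ hE₁𝓔 X₀ hX₀𝓔 (Ne.symm hE₁E) (Ne.symm hX₀E) (Ne.symm hX₀E₁)
    have hT : {E' ∈ 𝓔 | E' ≤ f X₀}.ncard = q ^ n + 1 :=
      hgood (f X₀) hErk hEW
        ⟨E₁, hE₁𝓔, X₀, hX₀𝓔, hE₁E, hX₀E, Ne.symm hX₀E₁, hE₁W, hX₀W⟩
    have hsetEq : {X ∈ S' | f X = f X₀} = {E' ∈ 𝓔 | E' ≤ f X₀} \ {E, E₁} := by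
      ext X
      simp only [Set.mem_setOf_eq, Set.mem_diff, Set.mem_insert_iff,
        Set.mem_singleton_iff, Set.mem_sep_iff]
      constructor
      · rintro ⟨hXS', hfX⟩
        obtain ⟨hX𝓔, hXE, hXE₁⟩ := (hmemS' X).mp hXS'
        refine ⟨⟨hX𝓔, ?_⟩, ?_⟩
        · rw [← hfX]; exact le_sup_right
        · tauto
      · rintro ⟨⟨hX𝓔, hXW⟩, hne⟩
        push_neg at hne
        refine ⟨(hmemS' X).mpr ⟨hX𝓔, hne.1, hne.2⟩, ?_⟩
        apply Submodule.eq_of_le_of_finrank_eq (sup_le (sup_le hEW hE₁W) hXW)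
        rw [hErk]
        exact hspan E hE E₁ hE₁𝓔 X hX𝓔 (Ne.symm hE₁E) (Ne.symm hne.1) (Ne.symm hne.2)
    rw [hsetEq]
    have hTfin : {E' ∈ 𝓔 | E' ≤ f X₀}.Finite := hfin.subset (Set.sep_subset _ _)
    have hsub : {E, E₁} ⊆ {E' ∈ 𝓔 | E' ≤ f X₀} := by
      rintro x hx
      rcases hx with rfl | hx
      · exact ⟨hE, hEW⟩
      · rw [Set.mem_singleton_iff] at hx
        subst hx
        exact ⟨hE₁𝓔, hE₁W⟩
    rw [Set.ncard_diff hsub (Set.toFinite _), hT, Set.ncard_pair (Ne.symm hE₁E)]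
    omega
  have hdvd : q ^ n - 1 ∣ q ^ m - 1 := by
    set 𝓕 : Finset (Submodule F V) := hS'fin.toFinset with h𝓕
    have h1 : 𝓕.card = q ^ m - 1 := by
      rw [← hS'card, Set.ncard_eq_toFinset_card S' hS'fin]
    have hpart := Finset.card_eq_sum_card_fiberwise
      (f := f) (s := 𝓕) (t := 𝓕.image f) (fun x hx => Finset.mem_image_of_mem f hx)
    have hconst : ∀ W ∈ 𝓕.image f, (𝓕.filter (fun X => f X = W)).card = q ^ n - 1 := by
      intro W hW
      obtain ⟨X₀, hX₀, rfl⟩ := Finset.mem_image.mp hW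
      have hX₀S' : X₀ ∈ S' := hS'fin.mem_toFinset.mp hX₀
      rw [← hfiber X₀ hX₀S', ← Set.ncard_coe_finset]
      congr 1
      ext X
      simp [h𝓕, Set.Finite.mem_toFinset]
    rw [Finset.sum_congr rfl hconst, Finset.sum_const, smul_eq_mul] at hpart
    exact ⟨_, by rw [← h1, hpart, mul_comm]⟩
  exact aux_pow_sub_one_dvd q n hq2 hn m hdvd
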